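/- In the commutative polynomial algebra ℂ[u,v,u⁻¹,v⁻¹] with Poisson bracket determined by {v,u} = uv (extended by the Leibniz rule), the function h = u + v + u⁻¹ + v⁻¹ + u⁻¹v⁻¹ satisfies {h,u} = uv - uv⁻¹ - v⁻¹ and {h,v} = -vu + vu⁻¹ + u⁻¹; i.e., the commutative Kontsevich system is Hamiltonian with Hamiltonian h. -/

import Mathlib

/- STATEMENT 0: In the commutative Laurent polynomial algebra ℂ[u^{±1},v^{±1}]
(modeled as the add-monoid algebra of ℤ × ℤ over ℂ) with the Poisson bracket
determined by {v,u} = uv, the Hamiltonian h = u + v + u⁻¹ + v⁻¹ + u⁻¹v⁻¹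
satisfies {h,u} = uv - uv⁻¹ - v⁻¹ and {h,v} = -vu + vu⁻¹ + u⁻¹. -/

noncomputable section

abbrev R0 : Type := AddMonoidAlgebra ℂ (ℤ × ℤ)

def u0 : R0 := AddMonoidAlgebra.single ((1 : ℤ), (0 : ℤ)) 1
def v0 : R0 := AddMonoidAlgebra.single ((0 : ℤ), (1 : ℤ)) 1
def ui0 : R0 := AddMonoidAlgebra.single ((-1 : ℤ), (0 : ℤ)) 1
def vi0 : R0 := AddMonoidAlgebra.single ((0 : ℤ), (-1 : ℤ)) 1

def h0 : R0 := u0 + v0 + ui0 + vi0 + ui0 * vi0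

lemma huui : u0 * ui0 = 1 := by
  simp [u0, ui0, AddMonoidAlgebra.single_mul_single, AddMonoidAlgebra.one_def, Prod.ext_iff]
  rfl

lemma hvvi : v0 * vi0 = 1 := by
  simp [v0, vi0, AddMonoidAlgebra.single_mul_single, AddMonoidAlgebra.one_def, Prod.ext_iff]
  rfl

theorem commutative_kontsevich_is_hamiltonian
    (B : R0 →ₗ[ℂ] R0 →ₗ[ℂ] R0)
    (hskew : ∀ a b : R0, B a b = - B b a)
    (hleib : ∀ a b c : R0, B a (b * c) = B a b * c + b * B a c)
    (hvu : B v0 u0 = u0 * v0) :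
    B h0 u0 = u0 * v0 - u0 * vi0 - vi0 ∧
    B h0 v0 = -(v0 * u0) + v0 * ui0 + ui0 := by
  -- B a 1 = 0
  have h1 : ∀ a : R0, B a 1 = 0 := by
    intro a
    have e := hleib a 1 1
    rw [mul_one, mul_one, one_mul] at e
    have : B a 1 + B a 1 = B a 1 + 0 := by rw [add_zero]; exact e.symm
    exact add_left_cancel this
  -- B a a = 0
  have haa : ∀ a : R0, B a a = 0 := by
    intro a
    have e := hskew a a
    have h2 : (2 : ℂ) • B a a = 0 := by
      rw [two_smul]; nth_rewrite 2 [e]; exact add_neg_cancel _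
    rcases smul_eq_zero.mp h2 with h | h
    · exact absurd h (by norm_num)
    · exact h
  have hBuv : B u0 v0 = -(u0 * v0) := by rw [hskew, hvu]
  -- B u0 vi0 = u0 * vi0
  have hBuvi : B u0 vi0 = u0 * vi0 := by
    have e := hleib u0 v0 vi0
    rw [hvvi, h1, hBuv] at e
    have e2 : v0 * B u0 vi0 = u0 * v0 * vi0 := by linear_combination -e
    calc B u0 vi0 = vi0 * (v0 * B u0 vi0) + (1 - vi0 * v0) * B u0 vi0 := by ring
    _ = u0 * vi0 := by
        rw [e2, mul_comm vi0 v0, hvvi]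
        linear_combination (vi0 * u0) * hvvi
  -- B u0 ui0 = 0
  have hBuui : B u0 ui0 = 0 := by
    have e := hleib u0 u0 ui0
    rw [huui, h1, haa] at e
    have e2 : u0 * B u0 ui0 = 0 := by linear_combination -e
    calc B u0 ui0 = ui0 * (u0 * B u0 ui0) + (1 - ui0 * u0) * B u0 ui0 := by ring
    _ = 0 := by rw [e2, mul_comm ui0 u0, huui]; ring
  -- B v0 ui0 = -(ui0 * v0)
  have hBvui : B v0 ui0 = -(ui0 * v0) := by
    have e := hleib v0 u0 ui0
    rw [huui, h1, hvu] at e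
    have e2 : u0 * B v0 ui0 = -(u0 * v0 * ui0) := by linear_combination -e
    calc B v0 ui0 = ui0 * (u0 * B v0 ui0) + (1 - ui0 * u0) * B v0 ui0 := by ring
    _ = -(ui0 * v0) := by
        rw [e2, mul_comm ui0 u0, huui]
        linear_combination (-(ui0 * v0)) * huui
  -- B v0 vi0 = 0
  have hBvvi : B v0 vi0 = 0 := by
    have e := hleib v0 v0 vi0
    rw [hvvi, h1, haa] at e
    have e2 : v0 * B v0 vi0 = 0 := by linear_combination -e
    calc B v0 vi0 = vi0 * (v0 * B v0 vi0) + (1 - vi0 * v0) * B v0 vi0 := by ring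
    _ = 0 := by rw [e2, mul_comm vi0 v0, hvvi]; ring
  -- products with ui0*vi0
  have hBu_uivi : B u0 (ui0 * vi0) = vi0 := by
    rw [hleib, hBuui, hBuvi]
    calc 0 * vi0 + ui0 * (u0 * vi0) = (ui0 * u0) * vi0 := by ring
    _ = vi0 := by rw [mul_comm ui0 u0, huui, one_mul]
  have hBv_uivi : B v0 (ui0 * vi0) = -ui0 := by
    rw [hleib, hBvui, hBvvi]
    calc -(ui0 * v0) * vi0 + ui0 * 0 = -(ui0 * (v0 * vi0)) := by ring
    _ = -ui0 := by rw [hvvi, mul_one]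
  -- assemble
  constructor
  · rw [hskew]
    have : B u0 h0 = B u0 u0 + B u0 v0 + B u0 ui0 + B u0 vi0 + B u0 (ui0 * vi0) := by
      simp [h0, map_add]
    rw [this, haa, hBuv, hBuui, hBuvi, hBu_uivi]
    ring
  · rw [hskew]
    have : B v0 h0 = B v0 u0 + B v0 v0 + B v0 ui0 + B v0 vi0 + B v0 (ui0 * vi0) := by
      simp [h0, map_add]
    rw [this, hvu, haa, hBvui, hBvvi, hBv_uivi]
    ring
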